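/- arXiv:1409.0871 — 3 statements merged into one kernel-verified Lean document; each statement's English description precedes it below -/
import Mathlib

section
/- Let O : A* → A* be an idempotent function (O ∘ O = O) and L ⊆ A* a language. Then O(L) ⊆ L if and only if the set φ_O = { w ∈ L | O(w) ≠ w } is opaque in L for O, i.e., O(φ_O) ⊆ O(L \ φ_O). -/
/-- For idempotent O, O(L) ⊆ L iff φ_O = {w ∈ L | O w ≠ w} is opaque in L for O. -/
theorem stmt1 {A : Type*} (O : List A → List A) (hidem : ∀ w, O (O w) = O w)
    (L : Set (List A)) :
    O '' L ⊆ L ↔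
      O '' {w ∈ L | O w ≠ w} ⊆ O '' (L \ {w ∈ L | O w ≠ w}) := by
  constructor
  · rintro h x ⟨w, ⟨hwL, _⟩, rfl⟩
    refine ⟨O w, ⟨h ⟨w, hwL, rfl⟩, ?_⟩, hidem w⟩
    simp [hidem w]
  · rintro h x ⟨w, hwL, rfl⟩
    by_cases hw : O w = w
    · rwa [hw]
    · obtain ⟨v, ⟨hvL, hv⟩, heq⟩ := h ⟨w, ⟨hwL, hw⟩, rfl⟩
      have hOv : O v = v := by
        by_contra hc
        exact hv ⟨hvL, hc⟩
      rw [← heq, hOv]; exact hvL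
end

section
/- Let {W_σ}_{σ ∈ Σ} be a partition of A*, let O = ⋃_σ O_σ where each O_σ is a function with domain W_σ, and suppose O_σ(W_σ) ⊆ W_σ for every σ. Then for any language L and secret φ ⊆ L, φ is opaque in L for O if and only if for every σ, φ ∩ W_σ is opaque in L ∩ W_σ for O_σ. -/
/-- Opacity for a piecewise observer w.r.t. a partition decomposes viewwise. -/
theorem stmt2 {A : Type*} {ι : Type*} (W : ι → Set (List A))
    (hdisj : ∀ σ₁ σ₂, σ₁ ≠ σ₂ → Disjoint (W σ₁) (W σ₂))
    (hcover : (⋃ σ, W σ) = Set.univ)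
    (Oσ : ι → List A → List A) (O : List A → List A)
    (hO : ∀ σ, ∀ w ∈ W σ, O w = Oσ σ w)
    (hinto : ∀ σ, Oσ σ '' W σ ⊆ W σ)
    (L φ : Set (List A)) (hφ : φ ⊆ L) :
    O '' φ ⊆ O '' (L \ φ) ↔
      ∀ σ, Oσ σ '' (φ ∩ W σ) ⊆ Oσ σ '' ((L ∩ W σ) \ (φ ∩ W σ)) := by
  constructor
  · intro h σ z ⟨x, ⟨hxφ, hxW⟩, hz⟩
    obtain ⟨y, ⟨hyL, hyφ⟩, hOy⟩ := h ⟨x, hxφ, rfl⟩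
    have hmem : ∃ τ, y ∈ W τ := by
      have := hcover ▸ Set.mem_univ y
      simpa using Set.mem_iUnion.mp (hcover ▸ Set.mem_univ y)
    obtain ⟨τ, hyW⟩ := hmem
    have hOyW : Oσ τ y ∈ W τ := hinto τ ⟨y, hyW, rfl⟩
    have hOxW : Oσ σ x ∈ W σ := hinto σ ⟨x, hxW, rfl⟩
    have heq : O y = Oσ τ y := hO τ y hyW
    have hOx : O x = Oσ σ x := hO σ x hxW
    have hστ : σ = τ := by
      by_contra hne
      exact (hdisj σ τ hne).le_bot ⟨by rw [← heq, hOy, hOx]; exact hOxW, hOyW⟩ |>.elim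
    subst hστ
    exact ⟨y, ⟨⟨hyL, hyW⟩, fun h' => hyφ h'.1⟩, by rw [← heq, hOy, hOx, hz]⟩
  · intro h z ⟨x, hxφ, hz⟩
    obtain ⟨σ, hxW⟩ := Set.mem_iUnion.mp (hcover ▸ Set.mem_univ x)
    obtain ⟨y, ⟨⟨hyL, hyW⟩, hyφ⟩, hOy⟩ := h σ ⟨x, ⟨hxφ, hxW⟩, rfl⟩
    refine ⟨y, ⟨hyL, fun hy => hyφ ⟨hy, hyW⟩⟩, ?_⟩
    rw [hO σ y hyW, hOy, ← hO σ x hxW, hz]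
end

section
/- Let V, C, D partition the alphabet A and π_{V,D} be the projection on V unless D. A language L ⊆ A* satisfies intransitive non-interference (π_{V,D}(L) ⊆ L) if and only if the set φ = { w ∈ L | π_{V,D}(w) ≠ w } is opaque in L for π_{V,D}. -/
/-- L satisfies INI (π_{V,D}(L) ⊆ L) iff
φ = {w ∈ L | π_{V,D}(w) ≠ w} is opaque in L for π_{V,D}. -/
theorem stmt7 {A : Type*} (V C D : Set A)
    (hcover : V ∪ C ∪ D = Set.univ)
    (hVC : Disjoint V C) (hVD : Disjoint V D) (hCD : Disjoint C D)
    (π : List A → List A)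
    (hnil : π [] = [])
    (hD : ∀ (u : List A) (a : A), a ∈ D → π (u ++ [a]) = u ++ [a])
    (hV : ∀ (u : List A) (a : A), a ∈ V → π (u ++ [a]) = π u ++ [a])
    (hC : ∀ (u : List A) (a : A), a ∈ C → π (u ++ [a]) = π u)
    (L : Set (List A)) :
    π '' L ⊆ L ↔
      π '' {w ∈ L | π w ≠ w} ⊆ π '' (L \ {w ∈ L | π w ≠ w}) := by
  have hidem : ∀ u, π (π u) = π u := by
    intro u
    induction u using List.reverseRecOn with
    | nil => rw [hnil, hnil]
    | append_singleton u a ih =>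
      have ha : a ∈ V ∪ C ∪ D := hcover ▸ Set.mem_univ a
      rcases ha with (ha | ha) | ha
      · rw [hV u a ha, hV (π u) a ha, ih]
      · rw [hC u a ha, ih]
      · rw [hD u a ha, hD u a ha]
  constructor
  · intro hINI w hw
    obtain ⟨x, hx, rfl⟩ := hw
    exact ⟨π x, ⟨hINI ⟨x, hx.1, rfl⟩, fun h => h.2 (hidem x)⟩, hidem x⟩
  · intro hop w hw
    obtain ⟨x, hx, rfl⟩ := hw
    by_cases h : π x = x
    · rw [h]; exact hx
    · obtain ⟨v, hv, hveq⟩ := hop ⟨x, ⟨hx, h⟩, rfl⟩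
      have : π v = v := by
        by_contra hc
        exact hv.2 ⟨hv.1, hc⟩
      rw [← hveq, this]
      exact hv.1
end
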